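/- Let X be a smooth manifold, C ⊂ X a closed submanifold with vanishing ideal I ⊂ C^∞(X), and let g_I be the space of multivector fields adapted to C. Then g_I[1] is a graded Lie subalgebra of Γ(X, Λ TX)[1] with respect to the Schouten bracket: if x ∈ g_I^k and y ∈ g_I^l then [x, y]_S ∈ g_I^{k+l−1}. -/

import Mathlib

open scoped Manifold

noncomputable section

variable {E H M : Type*} [NormedAddCommGroup E] [NormedSpace ℝ E]
  [TopologicalSpace H] (I : ModelWithCorners ℝ E H)
  [TopologicalSpace M] [ChartedSpace H M] [IsManifold I (⊤ : ℕ∞) M]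

/-- The commutative ring `A = C^∞(X)` of smooth functions on the manifold `X = M`. -/
abbrev SmoothA := ContMDiffMap I 𝓘(ℝ, ℝ) M ℝ (⊤ : ℕ∞)

/-- A `(k+1)`-vector field encoded as a skew-symmetric multiderivation of
`A = C^∞(X)` (the standard identification `Γ(ΛTX) ≅` alternating multiderivations). -/
structure IsMultiDerivation {k : ℕ} (X : (Fin (k + 1) → SmoothA I (M := M)) → SmoothA I (M := M)) : Prop where
  map_add : ∀ (g : Fin (k + 1) → SmoothA I (M := M)) (j : Fin (k + 1)) (a b : SmoothA I (M := M)),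
    X (Function.update g j (a + b)) = X (Function.update g j a) + X (Function.update g j b)
  map_smul : ∀ (g : Fin (k + 1) → SmoothA I (M := M)) (j : Fin (k + 1)) (c : ℝ) (a : SmoothA I (M := M)),
    X (Function.update g j (c • a)) = c • X (Function.update g j a)
  alternating : ∀ (g : Fin (k + 1) → SmoothA I (M := M)) (i j : Fin (k + 1)),
    i ≠ j → g i = g j → X g = 0
  leibniz : ∀ (g : Fin (k + 1) → SmoothA I (M := M)) (j : Fin (k + 1)) (a b : SmoothA I (M := M)),
    X (Function.update g j (a * b)) =
      a * X (Function.update g j b) + b * X (Function.update g j a)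

/-- Membership in `g_I`: the multivector field sends tuples of functions vanishing
on `C` to a function vanishing on `C` (equivalently, it vanishes on tuples of
covectors annihilating `TC`). -/
def AdaptedDer (C : Set M) {k : ℕ}
    (X : (Fin (k + 1) → SmoothA I (M := M)) → SmoothA I (M := M)) : Prop :=
  ∀ g : Fin (k + 1) → SmoothA I (M := M),
    (∀ i, ∀ x ∈ C, g i x = 0) → ∀ x ∈ C, X g x = 0

/-- One half of the Schouten bracket: the shuffle sum
`(X •̄ Y)(f₁,…,f_{k+l-1}) = Σ_{σ ∈ Sh(l, k-1)} sign(σ) X(Y(f_{σ(1)},…,f_{σ(l)}), f_{σ(l+1)},…)`. -/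
def schHalf {k m : ℕ}
    (X : (Fin (k + 1) → SmoothA I (M := M)) → SmoothA I (M := M))
    (Y : (Fin (m + 1) → SmoothA I (M := M)) → SmoothA I (M := M))
    (f : Fin (k + m + 1) → SmoothA I (M := M)) : SmoothA I (M := M) :=
  ∑ σ : Equiv.Perm (Fin (k + m + 1)),
    if (∀ i j : Fin (m + 1), i < j →
          σ (Fin.castLE (by omega) i) < σ (Fin.castLE (by omega) j)) ∧
       (∀ i j : Fin k, i < j →
          σ ⟨m + 1 + (i : ℕ), by have := i.isLt; omega⟩ <
            σ ⟨m + 1 + (j : ℕ), by have := j.isLt; omega⟩) then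
      ((Equiv.Perm.sign σ : ℤˣ) : ℤ) •
        X (Fin.cons (Y (fun i : Fin (m + 1) => f (σ (Fin.castLE (by omega) i))))
          (fun j : Fin k => f (σ ⟨m + 1 + (j : ℕ), by have := j.isLt; omega⟩)))
    else 0

/-- The Schouten bracket `[X,Y]_S = X •̄ Y − (−1)^{(k-1)(l-1)} Y •̄ X` of
multivector fields, in the multiderivation realization. -/
def schoutenBr {k m : ℕ}
    (X : (Fin (k + 1) → SmoothA I (M := M)) → SmoothA I (M := M))
    (Y : (Fin (m + 1) → SmoothA I (M := M)) → SmoothA I (M := M))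
    (f : Fin (k + m + 1) → SmoothA I (M := M)) : SmoothA I (M := M) :=
  schHalf I X Y f -
    ((-1 : ℤ) ^ (k * m)) • schHalf I Y X (fun j => f (Fin.cast (by omega) j))

lemma evalZsmul (n : ℤ) (g : SmoothA I (M := M)) (x : M) : (n • g) x = n • (g x) :=
  map_zsmul (AddMonoidHom.mk' (fun h : SmoothA I (M := M) => h x) (fun _ _ => rfl)) n g

lemma schHalf_vanish (C : Set M) {k m : ℕ}
    (X : (Fin (k + 1) → SmoothA I (M := M)) → SmoothA I (M := M))
    (Y : (Fin (m + 1) → SmoothA I (M := M)) → SmoothA I (M := M))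
    (hXa : AdaptedDer I C X) (hYa : AdaptedDer I C Y)
    (f : Fin (k + m + 1) → SmoothA I (M := M))
    (hf : ∀ i, ∀ x ∈ C, f i x = 0) (x : M) (hx : x ∈ C) :
    schHalf I X Y f x = 0 := by
  have ev : ∀ (s : Finset (Equiv.Perm (Fin (k + m + 1))))
      (F : Equiv.Perm (Fin (k + m + 1)) → SmoothA I (M := M)),
      (∑ σ ∈ s, F σ) x = ∑ σ ∈ s, F σ x := by
    intro s F
    induction s using Finset.induction with
    | empty => simp
    | insert _ _ h ih =>
      rw [Finset.sum_insert h, Finset.sum_insert h, ← ih]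
      rfl
  rw [schHalf, ev]
  apply Finset.sum_eq_zero
  intro σ _
  split
  · show (((Equiv.Perm.sign σ : ℤˣ) : ℤ) •
      X (Fin.cons (Y fun i : Fin (m + 1) => f (σ (Fin.castLE (by omega) i)))
        (fun j : Fin k => f (σ ⟨m + 1 + (j : ℕ), by have := j.isLt; omega⟩)))) x = 0
    have h0 : X (Fin.cons (Y fun i : Fin (m + 1) => f (σ (Fin.castLE (by omega) i)))
        (fun j : Fin k => f (σ ⟨m + 1 + (j : ℕ), by have := j.isLt; omega⟩))) x = 0 := by
      apply hXa _ _ x hx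
      intro i
      refine Fin.cases ?_ ?_ i
      · intro y hy
        exact hYa _ (fun i' => hf _) y hy
      · intro j y hy
        simpa using hf _ y hy
    rw [show (((Equiv.Perm.sign σ : ℤˣ) : ℤ) •
      X (Fin.cons (Y fun i : Fin (m + 1) => f (σ (Fin.castLE (by omega) i)))
        (fun j : Fin k => f (σ ⟨m + 1 + (j : ℕ), by have := j.isLt; omega⟩)))) x
      = ((Equiv.Perm.sign σ : ℤˣ) : ℤ) •
        (X (Fin.cons (Y fun i : Fin (m + 1) => f (σ (Fin.castLE (by omega) i)))
        (fun j : Fin k => f (σ ⟨m + 1 + (j : ℕ), by have := j.isLt; omega⟩))) x)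
      from evalZsmul I _ _ x, h0]; simp
  · rfl

/-- Let `X` be a smooth manifold and `C ⊆ X` a closed submanifold with vanishing
ideal `I_C ⊆ C^∞(X)`.  The adapted multivector fields `g_I[1]` form a graded Lie
subalgebra for the Schouten bracket: if `x ∈ g_I^k` and `y ∈ g_I^l` then
`[x,y]_S ∈ g_I^{k+l-1}`. -/
theorem schouten_bracket_adapted (C : Set M) (hC : IsClosed C) (k m : ℕ)
    (X : (Fin (k + 1) → SmoothA I (M := M)) → SmoothA I (M := M))
    (Y : (Fin (m + 1) → SmoothA I (M := M)) → SmoothA I (M := M))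
    (hX : IsMultiDerivation I X) (hY : IsMultiDerivation I Y)
    (hXa : AdaptedDer I C X) (hYa : AdaptedDer I C Y) :
    ∀ f : Fin (k + m + 1) → SmoothA I (M := M),
      (∀ i, ∀ x ∈ C, f i x = 0) → ∀ x ∈ C, schoutenBr I X Y f x = 0 := by
  intro f hf x hx
  have h1 := schHalf_vanish I C X Y hXa hYa f hf x hx
  have h2 := schHalf_vanish I C Y X hYa hXa
    (fun j => f (Fin.cast (by omega) j)) (fun i => hf _) x hx
  show schHalf I X Y f x -
    (((-1 : ℤ) ^ (k * m)) • schHalf I Y X (fun j => f (Fin.cast (by omega) j))) x = 0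
  have : (((-1 : ℤ) ^ (k * m)) • schHalf I Y X (fun j => f (Fin.cast (by omega) j))) x
      = ((-1 : ℤ) ^ (k * m)) • (schHalf I Y X (fun j => f (Fin.cast (by omega) j)) x) :=
    evalZsmul I _ _ x
  rw [this, h1, h2]; simp

end
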